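/- Let a : ℝ → ℝ satisfy a(u) < 0 for all u, and let Δ > 0. For the update V' = e^{a(u)Δ} V + (b(u)/a(u))(e^{a(u)Δ} − 1) + ν ξ, where b : ℝ → ℝ, ν ∈ ℝ and ξ is arbitrary, one has |V'| ≤ e^{a(u)Δ}|V| + |b(u)| Δ + |ν||ξ|. In particular, if |a(u)| ≥ C_a > 0 and |b(u)| ≤ C_b, then |V'| ≤ e^{−C_a Δ}|V| + C_b Δ + |ν||ξ|. -/
import Mathlib

/-- Lyapunov-type bound for the splitting update of the V-component. -/
theorem stmt_3 (a b : ℝ → ℝ) (ha : ∀ u, a u < 0) (Δ : ℝ) (hΔ : 0 < Δ)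
    (u V ν ξ : ℝ) (V' : ℝ)
    (hV' : V' = Real.exp (a u * Δ) * V + (b u / a u) * (Real.exp (a u * Δ) - 1) + ν * ξ) :
    |V'| ≤ Real.exp (a u * Δ) * |V| + |b u| * Δ + |ν| * |ξ|
    ∧ ∀ C_a C_b : ℝ, 0 < C_a → C_a ≤ |a u| → |b u| ≤ C_b →
        |V'| ≤ Real.exp (-C_a * Δ) * |V| + C_b * Δ + |ν| * |ξ| := by
  have hau : a u < 0 := ha u
  have hx : a u * Δ < 0 := mul_neg_of_neg_of_pos hau hΔ
  have hexp1 : Real.exp (a u * Δ) < 1 := Real.exp_lt_one_iff.mpr hx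
  have hexp0 : 0 < Real.exp (a u * Δ) := Real.exp_pos _
  have hmid : |(b u / a u) * (Real.exp (a u * Δ) - 1)| ≤ |b u| * Δ := by
    rw [abs_mul, abs_div]
    have h1 : |Real.exp (a u * Δ) - 1| = 1 - Real.exp (a u * Δ) := by
      rw [abs_sub_comm, abs_of_nonneg (by linarith)]
    have h2 : 1 - Real.exp (a u * Δ) ≤ -(a u * Δ) := by
      have := Real.add_one_le_exp (a u * Δ); linarith
    have ha' : |a u| = -(a u) := abs_of_neg hau
    rw [h1, ha']
    rw [div_mul_eq_mul_div, div_le_iff₀ (by linarith)]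
    calc |b u| * (1 - Real.exp (a u * Δ)) ≤ |b u| * (-(a u * Δ)) :=
          mul_le_mul_of_nonneg_left h2 (abs_nonneg _)
      _ = |b u| * Δ * -(a u) := by ring
  have key : |V'| ≤ Real.exp (a u * Δ) * |V| + |b u| * Δ + |ν| * |ξ| := by
    rw [hV']
    calc |Real.exp (a u * Δ) * V + (b u / a u) * (Real.exp (a u * Δ) - 1) + ν * ξ|
        ≤ |Real.exp (a u * Δ) * V + (b u / a u) * (Real.exp (a u * Δ) - 1)| + |ν * ξ| :=
          abs_add_le _ _
      _ ≤ |Real.exp (a u * Δ) * V| + |(b u / a u) * (Real.exp (a u * Δ) - 1)| + |ν * ξ| := by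
          gcongr; exact abs_add_le _ _
      _ ≤ Real.exp (a u * Δ) * |V| + |b u| * Δ + |ν| * |ξ| := by
          rw [abs_mul (Real.exp (a u * Δ)) V, abs_of_pos hexp0, abs_mul ν ξ]
          linarith [hmid]
  refine ⟨key, fun C_a C_b hCa hCaa hCb => ?_⟩
  have h1 : a u * Δ ≤ -C_a * Δ := by
    have : a u ≤ -C_a := by rw [abs_of_neg hau] at hCaa; linarith
    nlinarith
  calc |V'| ≤ Real.exp (a u * Δ) * |V| + |b u| * Δ + |ν| * |ξ| := key
    _ ≤ Real.exp (-C_a * Δ) * |V| + C_b * Δ + |ν| * |ξ| := by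
        exact add_le_add (add_le_add (mul_le_mul_of_nonneg_right
          (Real.exp_le_exp.mpr h1) (abs_nonneg _))
          (mul_le_mul_of_nonneg_right hCb hΔ.le)) le_rfl
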